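/- For every real number p with 0 < p ≤ 0.189: 1 − H(p) − p·log₂ 3 > 0. -/

import Mathlib

private lemma habs13 : |(1/3:ℝ)| = 1/3 := abs_of_pos (by norm_num)
private lemma habs15 : |(1/5:ℝ)| = 1/5 := abs_of_pos (by norm_num)
private lemma habs18 : |(1/8:ℝ)| = 1/8 := abs_of_pos (by norm_num)
private lemma habs1811 : |(1/811:ℝ)| = 1/811 := abs_of_pos (by norm_num)

private lemma log3_bounds : (1.098611:ℝ) < Real.log 3 ∧ Real.log 3 < 1.098614 := by
  have h := Real.abs_log_sub_add_sum_range_le (x := 1/3) (by rw [habs13]; norm_num) 12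
  rw [habs13, show (1:ℝ) - 1/3 = 2/3 by norm_num,
    show Real.log (2/3) = Real.log 2 - Real.log 3 from Real.log_div (by norm_num) (by norm_num),
    abs_le] at h
  obtain ⟨h1, h2⟩ := h
  simp [Finset.sum_range_succ] at h1 h2
  have l2 := Real.log_two_gt_d9
  have l2' := Real.log_two_lt_d9
  norm_num at h1 h2 l2 l2' ⊢
  constructor <;> linarith

private lemma log5_bounds : (1.609437:ℝ) < Real.log 5 ∧ Real.log 5 < 1.609439 := by
  have h := Real.abs_log_sub_add_sum_range_le (x := 1/5) (by rw [habs15]; norm_num) 9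
  have e4 : Real.log (4/5) = 2 * Real.log 2 - Real.log 5 := by
    rw [Real.log_div (by norm_num) (by norm_num), show (4:ℝ) = 2^2 by norm_num, Real.log_pow]
    push_cast; ring
  rw [habs15, show (1:ℝ) - 1/5 = 4/5 by norm_num, e4, abs_le] at h
  obtain ⟨h1, h2⟩ := h
  simp [Finset.sum_range_succ] at h1 h2
  have l2 := Real.log_two_gt_d9
  have l2' := Real.log_two_lt_d9
  norm_num at h1 h2 l2 l2' ⊢
  constructor <;> linarith

private lemma log7_bounds : (1.945910:ℝ) < Real.log 7 ∧ Real.log 7 < 1.945911 := by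
  have h := Real.abs_log_sub_add_sum_range_le (x := 1/8) (by rw [habs18]; norm_num) 8
  have e4 : Real.log (7/8) = Real.log 7 - 3 * Real.log 2 := by
    rw [Real.log_div (by norm_num) (by norm_num), show (8:ℝ) = 2^3 by norm_num, Real.log_pow]
    push_cast; ring
  rw [habs18, show (1:ℝ) - 1/8 = 7/8 by norm_num, e4, abs_le] at h
  obtain ⟨h1, h2⟩ := h
  simp [Finset.sum_range_succ] at h1 h2
  have l2 := Real.log_two_gt_d9
  have l2' := Real.log_two_lt_d9
  norm_num at h1 h2 l2 l2' ⊢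
  constructor <;> linarith

private lemma log811_bounds :
    (0.0012338:ℝ) < Real.log (811/810) ∧ Real.log (811/810) < 0.0012339 := by
  have h := Real.abs_log_sub_add_sum_range_le (x := 1/811) (by rw [habs1811]; norm_num) 2
  have e4 : Real.log (810/811) = -Real.log (811/810) := by
    rw [show (810:ℝ)/811 = (811/810)⁻¹ by norm_num, Real.log_inv]
  rw [habs1811, show (1:ℝ) - 1/811 = 810/811 by norm_num, e4, abs_le] at h
  obtain ⟨h1, h2⟩ := h
  simp [Finset.sum_range_succ] at h1 h2
  norm_num at h1 h2 ⊢
  constructor <;> linarith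

/-- Binary entropy. -/
noncomputable def H (p : ℝ) : ℝ :=
  -p * Real.logb 2 p - (1 - p) * Real.logb 2 (1 - p)

theorem stmt_14 (p : ℝ) (hp0 : 0 < p) (hp1 : p ≤ 0.189) :
    1 - H p - p * Real.logb 2 3 > 0 := by
  have hp1' : p ≤ 189/1000 := by norm_num at hp1 ⊢; linarith
  have h1p : (0:ℝ) < 1 - p := by linarith
  -- Gibbs' inequality with q = 189/1000
  have A : Real.log (189/1000) - Real.log p ≤ (189/1000)/p - 1 := by
    have h := Real.log_le_sub_one_of_pos (show (0:ℝ) < (189/1000)/p by positivity)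
    rwa [Real.log_div (by norm_num) (ne_of_gt hp0)] at h
  have B : Real.log (811/1000) - Real.log (1-p) ≤ (811/1000)/(1-p) - 1 := by
    have h := Real.log_le_sub_one_of_pos (show (0:ℝ) < (811/1000)/(1-p) by positivity)
    rwa [Real.log_div (by norm_num) (ne_of_gt h1p)] at h
  have A' : p * (Real.log (189/1000) - Real.log p) ≤ 189/1000 - p := by
    have h := mul_le_mul_of_nonneg_left A hp0.le
    have e : p * ((189/1000)/p - 1) = 189/1000 - p := by field_simp
    linarith [h.trans_eq e]
  have B' : (1-p) * (Real.log (811/1000) - Real.log (1-p)) ≤ 811/1000 - (1-p) := by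
    have h := mul_le_mul_of_nonneg_left B h1p.le
    have e : (1-p) * ((811/1000)/(1-p) - 1) = 811/1000 - (1-p) := by field_simp
    linarith [h.trans_eq e]
  have gibbs : p * Real.log (189/1000) + (1-p) * Real.log (811/1000)
      ≤ p * Real.log p + (1-p) * Real.log (1-p) := by nlinarith [A', B']
  -- expand the two rational logs into prime logs
  have e1 : Real.log (189/1000)
      = 3*Real.log 3 + Real.log 7 - (3*Real.log 2 + 3*Real.log 5) := by
    rw [show (189:ℝ)/1000 = 3^3*7/(2^3*5^3) by norm_num,
      Real.log_div (by norm_num) (by norm_num), Real.log_mul (by norm_num) (by norm_num),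
      Real.log_mul (by norm_num) (by norm_num), Real.log_pow, Real.log_pow, Real.log_pow]
    push_cast; ring
  have e2 : Real.log (811/1000)
      = Real.log (811/810) + 4*Real.log 3 - (2*Real.log 2 + 2*Real.log 5) := by
    have h1 : Real.log (811/1000) = Real.log (811/810) + Real.log ((3:ℝ)^4/(2^2*5^2)) := by
      rw [← Real.log_mul (by norm_num) (by norm_num)]; norm_num
    have h2 : Real.log ((3:ℝ)^4/(2^2*5^2)) = 4*Real.log 3 - (2*Real.log 2 + 2*Real.log 5) := by
      rw [Real.log_div (by norm_num) (by norm_num), Real.log_mul (by norm_num) (by norm_num),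
        Real.log_pow, Real.log_pow, Real.log_pow]
      push_cast; ring
    rw [h1, h2]; ring
  obtain ⟨l3a, l3b⟩ := log3_bounds
  obtain ⟨l5a, l5b⟩ := log5_bounds
  obtain ⟨l7a, l7b⟩ := log7_bounds
  obtain ⟨l8a, l8b⟩ := log811_bounds
  have l2a := Real.log_two_gt_d9
  have l2b := Real.log_two_lt_d9
  -- coefficient of p is negative
  have hc : Real.log (189/1000) - Real.log (811/1000) - Real.log 3 ≤ 0 := by
    rw [e1, e2]; linarith
  have hpc : p * (Real.log (189/1000) - Real.log (811/1000) - Real.log 3)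
      ≥ (189/1000) * (Real.log (189/1000) - Real.log (811/1000) - Real.log 3) :=
    mul_le_mul_of_nonpos_right hp1' hc
  -- positivity of the key quantity
  have key : Real.log 2 + p * Real.log p + (1-p) * Real.log (1-p) - p * Real.log 3 > 0 := by
    have base : Real.log 2 + Real.log (811/1000)
        + (189/1000) * (Real.log (189/1000) - Real.log (811/1000) - Real.log 3) > 0 := by
      rw [e1, e2]; linarith
    nlinarith [gibbs, hpc, base]
  have h2pos : (0:ℝ) < Real.log 2 := Real.log_pos (by norm_num)
  have expand : 1 - H p - p * Real.logb 2 3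
      = (Real.log 2 + p * Real.log p + (1-p) * Real.log (1-p) - p * Real.log 3) / Real.log 2 := by
    simp only [H, Real.logb]
    field_simp
    ring
  rw [gt_iff_lt, expand]
  exact div_pos key h2pos
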